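/- Let c, s, τ be positive integers with τ ≤ s, and set d = c·s, s₁ = max(1, s−1), α₁ = 1 − (τ−1)/s₁, α₂ = (τ−1)/s₁, α₃ = τ/s − (τ−1)/s₁. Let G be any d×d real matrix and x ∈ ℝ^d. Then the average, over all tuples S = (S_1,…,S_c) where each S_l is a τ-element subset of block l, of the quantity (x^Ŝ)ᵀ G x^Ŝ equals (τ/s)·[α₁ xᵀD^G x + α₂ xᵀG x + α₃ xᵀ(G − B^G)x]. -/

import Mathlib

open Finset

/-- The finite set of all distributed samplings: tuples `S = (S_1,…,S_c)` where
each `S_l` is a `τ`-element subset of the block `{1,…,s}`. -/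
def samplings (c s τ : ℕ) : Finset (Fin c → Finset (Fin s)) :=
  Finset.univ.filter fun S => ∀ l, (S l).card = τ

/-- `x^Ŝ`: the vector agreeing with `x` on `Ŝ = {(l,i) : i ∈ S_l}` and `0` elsewhere. -/
def restr {c s : ℕ} (S : Fin c → Finset (Fin s)) (x : Fin c × Fin s → ℝ) :
    Fin c × Fin s → ℝ :=
  fun p => if p.2 ∈ S p.1 then x p else 0

lemma aux1' {α : Type*} [DecidableEq α] (u : Finset α) {i : α} (hi : i ∈ u) (m : ℕ)
    (P : Finset α → Prop) [DecidablePred P] :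
    ((u.powersetCard (m+1)).filter fun A => i ∈ A ∧ P (A.erase i)).card
      = (((u.erase i).powersetCard m).filter P).card := by
  refine Finset.card_bij' (fun A _ => A.erase i) (fun B _ => insert i B) ?_ ?_ ?_ ?_
  · intro A hA
    simp only [mem_filter, mem_powersetCard] at hA ⊢
    obtain ⟨⟨hsub, hcard⟩, hiA, hP⟩ := hA
    refine ⟨⟨erase_subset_erase _ hsub, ?_⟩, hP⟩
    rw [card_erase_of_mem hiA, hcard]
    rfl
  · intro B hB
    simp only [mem_filter, mem_powersetCard] at hB ⊢
    obtain ⟨⟨hsub, hcard⟩, hP⟩ := hB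
    have hiB : i ∉ B := fun h => (mem_erase.1 (hsub h)).1 rfl
    refine ⟨⟨?_, ?_⟩, mem_insert_self _ _, by rw [erase_insert hiB]; exact hP⟩
    · exact insert_subset hi (hsub.trans (erase_subset _ _))
    · rw [card_insert_of_notMem hiB, hcard]
  · intro A hA
    simp only [mem_filter] at hA
    exact insert_erase hA.2.1
  · intro B hB
    simp only [mem_filter, mem_powersetCard] at hB
    exact erase_insert fun h => (mem_erase.1 (hB.1.1 h)).1 rfl

lemma aux1 {α : Type*} [DecidableEq α] (u : Finset α) {i : α} (hi : i ∈ u) (m : ℕ) :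
    ((u.powersetCard (m+1)).filter fun A => i ∈ A).card = (u.card - 1).choose m := by
  have h := aux1' u hi m (fun _ => True)
  simp only [and_true, filter_true_of_mem (fun _ _ => trivial)] at h
  rw [h, card_powersetCard, card_erase_of_mem hi]

lemma aux2 {α : Type*} [DecidableEq α] (u : Finset α) {i j : α} (hi : i ∈ u) (hj : j ∈ u)
    (hij : i ≠ j) (m : ℕ) :
    ((u.powersetCard (m+2)).filter fun A => i ∈ A ∧ j ∈ A).card = (u.card - 2).choose m := by
  have h1 := aux1' u hi (m+1) (fun B => j ∈ B)
  have h2 := aux1 (u.erase i) (mem_erase.2 ⟨hij.symm, hj⟩) m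
  have hmem : ∀ A : Finset α, (i ∈ A ∧ j ∈ A.erase i) ↔ (i ∈ A ∧ j ∈ A) := by
    intro A; simp [mem_erase, hij.symm]
  rw [filter_congr (fun A _ => hmem A)] at h1
  rw [h1, h2, card_erase_of_mem hi, Nat.sub_sub]

lemma cntA {s τ : ℕ} (hs : 0 < s) (hτ : 0 < τ) (i : Fin s) :
    (((univ : Finset (Fin s)).powersetCard τ).filter fun A => i ∈ A).card * s
      = τ * s.choose τ := by
  obtain ⟨m, rfl⟩ : ∃ m, τ = m + 1 := ⟨τ - 1, (Nat.succ_pred_eq_of_pos hτ).symm⟩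
  rw [aux1 _ (mem_univ i) m, card_univ, Fintype.card_fin]
  have h := Nat.add_one_mul_choose_eq (s - 1) m
  rw [Nat.sub_add_cancel hs] at h
  rw [mul_comm, h, mul_comm]

lemma cntB {s τ : ℕ} (hτ : 0 < τ) {i j : Fin s} (hij : i ≠ j) :
    (((univ : Finset (Fin s)).powersetCard τ).filter fun A => i ∈ A ∧ j ∈ A).card * (s * (s - 1))
      = (τ * (τ - 1)) * s.choose τ := by
  have hs2 : 2 ≤ s := by
    have h1 : 1 < Fintype.card (Fin s) := Fintype.one_lt_card_iff_nontrivial.2 ⟨⟨i, j, hij⟩⟩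
    simp at h1; omega
  match τ, hτ with
  | 1, _ =>
    have he : (((univ : Finset (Fin s)).powersetCard 1).filter fun A => i ∈ A ∧ j ∈ A) = ∅ := by
      rw [filter_eq_empty_iff]
      intro A hA
      rw [mem_powersetCard] at hA
      rintro ⟨h1, h2⟩
      have := Finset.one_lt_card.2 ⟨i, h1, j, h2, hij⟩
      omega
    simp [he]
  | (m+2), _ =>
    rw [aux2 _ (mem_univ i) (mem_univ j) hij m, card_univ, Fintype.card_fin]
    have h1 := Nat.add_one_mul_choose_eq (s - 2) m
    have h2 := Nat.add_one_mul_choose_eq (s - 1) (m + 1)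
    have e1 : s - 2 + 1 = s - 1 := by omega
    have e2 : s - 1 + 1 = s := by omega
    rw [e1] at h1
    rw [e2] at h2
    have e3 : m + 2 - 1 = m + 1 := rfl
    calc (s - 2).choose m * (s * (s - 1)) = s * ((s - 1) * (s - 2).choose m) := by ring
      _ = s * ((s - 1).choose (m + 1) * (m + 1)) := by rw [h1]
      _ = (m + 1) * (s * (s - 1).choose (m + 1)) := by ring
      _ = (m + 1) * (s.choose (m + 2) * (m + 2)) := by rw [h2]
      _ = ((m + 2) * (m + 2 - 1)) * s.choose (m + 2) := by rw [e3]; ring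

/-- sum over samplings of a single term, expressed via a product of counts -/
lemma count_lemma (c s τ : ℕ) (G : Matrix (Fin c × Fin s) (Fin c × Fin s) ℝ)
    (x : Fin c × Fin s → ℝ) (p q : Fin c × Fin s) :
    (∑ S ∈ samplings c s τ, restr S x p * G p q * restr S x q)
      = (∏ l : Fin c, ((((univ : Finset (Fin s)).powersetCard τ).filter
          (fun A => (l = p.1 → p.2 ∈ A) ∧ (l = q.1 → q.2 ∈ A))).card : ℝ))
        * (x p * G p q * x q) := by
  classical
  have hsamp : samplings c s τ
      = Fintype.piFinset fun _ : Fin c => (univ : Finset (Fin s)).powersetCard τ := by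
    ext S
    simp [samplings, Fintype.mem_piFinset, mem_powersetCard, subset_univ]
  rw [hsamp]
  have hterm : ∀ S : Fin c → Finset (Fin s),
      restr S x p * G p q * restr S x q
        = (∏ l : Fin c, if (l = p.1 → p.2 ∈ S l) ∧ (l = q.1 → q.2 ∈ S l) then (1:ℝ) else 0)
          * (x p * G p q * x q) := by
    intro S
    by_cases h1 : p.2 ∈ S p.1 <;> by_cases h2 : q.2 ∈ S q.1
    · rw [Finset.prod_eq_one fun l _ => if_pos ⟨fun hl => hl ▸ h1, fun hl => hl ▸ h2⟩]
      simp [restr, h1, h2]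
    · rw [show (∏ l : Fin c, if (l = p.1 → p.2 ∈ S l) ∧ (l = q.1 → q.2 ∈ S l) then (1:ℝ) else 0) = 0
        from Finset.prod_eq_zero (mem_univ q.1) (if_neg fun hcon => h2 (hcon.2 rfl))]
      simp [restr, h2]
    · rw [show (∏ l : Fin c, if (l = p.1 → p.2 ∈ S l) ∧ (l = q.1 → q.2 ∈ S l) then (1:ℝ) else 0) = 0
        from Finset.prod_eq_zero (mem_univ p.1) (if_neg fun hcon => h1 (hcon.1 rfl))]
      simp [restr, h1]
    · rw [show (∏ l : Fin c, if (l = p.1 → p.2 ∈ S l) ∧ (l = q.1 → q.2 ∈ S l) then (1:ℝ) else 0) = 0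
        from Finset.prod_eq_zero (mem_univ p.1) (if_neg fun hcon => h1 (hcon.1 rfl))]
      simp [restr, h1]
  simp_rw [hterm, ← Finset.sum_mul]
  congr 1
  rw [← Finset.prod_univ_sum (fun _ : Fin c => (univ : Finset (Fin s)).powersetCard τ)
    (fun l A => if (l = p.1 → p.2 ∈ A) ∧ (l = q.1 → q.2 ∈ A) then (1:ℝ) else 0)]
  exact Finset.prod_congr rfl fun l _ => by rw [Finset.sum_boole]

/-- ratio evaluation -/
lemma ratio_lemma (c s τ : ℕ) (hc : 0 < c) (hs : 0 < s) (hτ : 0 < τ) (hτs : τ ≤ s)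
    (p q : Fin c × Fin s) :
    (∏ l : Fin c, ((((univ : Finset (Fin s)).powersetCard τ).filter
        (fun A => (l = p.1 → p.2 ∈ A) ∧ (l = q.1 → q.2 ∈ A))).card : ℝ)) / ((s.choose τ : ℝ) ^ c)
      = if p = q then (τ : ℝ) / s
        else if p.1 = q.1 then (τ : ℝ) / s * (((τ : ℝ) - 1) / ((max 1 (s - 1) : ℕ) : ℝ))
        else ((τ : ℝ) / s) ^ 2 := by
  classical
  set n : ℕ := s.choose τ with hn
  have hn0 : (0:ℝ) < (n : ℝ) := by exact_mod_cast Nat.choose_pos hτs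
  have hs0 : (0:ℝ) < (s : ℝ) := by exact_mod_cast hs
  set cnt : Fin c → ℕ := fun l => (((univ : Finset (Fin s)).powersetCard τ).filter
      (fun A => (l = p.1 → p.2 ∈ A) ∧ (l = q.1 → q.2 ∈ A))).card with hcnt
  have hrest : ∀ l : Fin c, l ≠ p.1 → l ≠ q.1 → cnt l = n := by
    intro l hl1 hl2
    show (((univ : Finset (Fin s)).powersetCard τ).filter
      (fun A => (l = p.1 → p.2 ∈ A) ∧ (l = q.1 → q.2 ∈ A))).card = n
    rw [filter_true_of_mem fun A _ => ⟨fun h => absurd h hl1, fun h => absurd h hl2⟩,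
      card_powersetCard, card_univ, Fintype.card_fin]
  by_cases hb : p.1 = q.1
  · have hprod : (∏ l : Fin c, (cnt l : ℝ)) = (cnt p.1 : ℝ) * (n : ℝ) ^ (c - 1) := by
      rw [← Finset.mul_prod_erase univ _ (mem_univ p.1)]
      congr 1
      rw [Finset.prod_congr rfl (fun l hl => by
        rw [hrest l (mem_erase.1 hl).1 (hb ▸ (mem_erase.1 hl).1)]),
        prod_const, card_erase_of_mem (mem_univ p.1), card_univ, Fintype.card_fin]
    have hcc : c - 1 + 1 = c := by omega
    by_cases hpq : p = q
    · rw [if_pos hpq]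
      have hc1 : cnt p.1 = (((univ : Finset (Fin s)).powersetCard τ).filter
          fun A => p.2 ∈ A).card :=
        congrArg Finset.card (filter_congr fun A _ => by subst hpq; simp)
      have hkey := cntA hs hτ p.2
      rw [← hc1] at hkey
      have hkeyR : (cnt p.1 : ℝ) * (s : ℝ) = (τ : ℝ) * (n : ℝ) := by exact_mod_cast hkey
      have hpow : (n : ℝ) ^ c = (n : ℝ) ^ (c - 1) * n := by rw [← pow_succ, hcc]
      rw [hprod, hpow]
      field_simp
      linear_combination hkeyR
    · rw [if_neg hpq, if_pos hb]
      have hss : p.2 ≠ q.2 := fun h => hpq (Prod.ext hb h)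
      have hs2 : 2 ≤ s := by
        have h1 : 1 < Fintype.card (Fin s) := Fintype.one_lt_card_iff_nontrivial.2 ⟨⟨p.2, q.2, hss⟩⟩
        simp at h1; omega
      have hmax : (max 1 (s - 1) : ℕ) = s - 1 := by omega
      have hcastm : ((max 1 (s - 1) : ℕ) : ℝ) = (s : ℝ) - 1 := by
        rw [hmax]; push_cast [Nat.cast_sub hs]; ring
      have hc1 : cnt p.1 = (((univ : Finset (Fin s)).powersetCard τ).filter
          fun A => p.2 ∈ A ∧ q.2 ∈ A).card :=
        congrArg Finset.card (filter_congr fun A _ => by simp [hb])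
      have hkey := cntB hτ hss
      rw [← hc1] at hkey
      have hkeyR : (cnt p.1 : ℝ) * ((s : ℝ) * ((s : ℝ) - 1))
          = ((τ : ℝ) * ((τ : ℝ) - 1)) * (n : ℝ) := by
        have hcast := congrArg (Nat.cast : ℕ → ℝ) hkey
        push_cast [Nat.cast_sub (by omega : 1 ≤ s), Nat.cast_sub (by omega : 1 ≤ τ)] at hcast
        linarith [hcast]
      have hsm1 : (s : ℝ) - 1 ≠ 0 := by
        have : (2 : ℝ) ≤ (s : ℝ) := by exact_mod_cast hs2
        linarith
      have hpow : (n : ℝ) ^ c = (n : ℝ) ^ (c - 1) * n := by rw [← pow_succ, hcc]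
      rw [hprod, hcastm, hpow]
      field_simp
      linear_combination hkeyR
  · rw [if_neg (fun h => hb (congrArg Prod.fst h)), if_neg hb]
    have hq1 : q.1 ∈ univ.erase p.1 := mem_erase.2 ⟨fun h => hb h.symm, mem_univ _⟩
    have hc2 : 2 ≤ c := by
      have h1 : 1 < Fintype.card (Fin c) := Fintype.one_lt_card_iff_nontrivial.2 ⟨⟨p.1, q.1, hb⟩⟩
      simp at h1; omega
    have hprod : (∏ l : Fin c, (cnt l : ℝ))
        = (cnt p.1 : ℝ) * ((cnt q.1 : ℝ) * (n : ℝ) ^ (c - 2)) := by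
      rw [← Finset.mul_prod_erase univ _ (mem_univ p.1)]
      congr 1
      rw [← Finset.mul_prod_erase _ _ hq1]
      congr 1
      rw [Finset.prod_congr rfl (fun l hl => by
        have h1 := mem_erase.1 hl
        have h2 := mem_erase.1 h1.2
        rw [hrest l h2.1 h1.1]),
        prod_const, card_erase_of_mem hq1, card_erase_of_mem (mem_univ p.1),
        card_univ, Fintype.card_fin, Nat.sub_sub]
    have hcp : cnt p.1 = (((univ : Finset (Fin s)).powersetCard τ).filter
        fun A => p.2 ∈ A).card :=
      congrArg Finset.card (filter_congr fun A _ => by simp [hb])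
    have hcq : cnt q.1 = (((univ : Finset (Fin s)).powersetCard τ).filter
        fun A => q.2 ∈ A).card :=
      congrArg Finset.card (filter_congr fun A _ => by
        simp [show ¬ q.1 = p.1 from fun h => hb h.symm])
    have hkp := cntA hs hτ p.2
    have hkq := cntA hs hτ q.2
    rw [← hcp] at hkp
    rw [← hcq] at hkq
    have hkpR : (cnt p.1 : ℝ) * (s : ℝ) = (τ : ℝ) * (n : ℝ) := by exact_mod_cast hkp
    have hkqR : (cnt q.1 : ℝ) * (s : ℝ) = (τ : ℝ) * (n : ℝ) := by exact_mod_cast hkq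
    have hcc : c - 2 + 2 = c := by omega
    have hmm : (cnt p.1 : ℝ) * (cnt q.1 : ℝ) * ((s:ℝ) * (s:ℝ))
        = (τ:ℝ) * (n:ℝ) * ((τ:ℝ) * (n:ℝ)) := by
      linear_combination ((cnt q.1 : ℝ) * (s:ℝ)) * hkpR + ((τ:ℝ) * (n:ℝ)) * hkqR
    have hpow : (n : ℝ) ^ c = (n : ℝ) ^ (c - 2) * (n : ℝ) ^ 2 := by rw [← pow_add, hcc]
    rw [hprod, hpow]
    field_simp
    linear_combination hmm

theorem stmt_2 (c s τ : ℕ) (hc : 0 < c) (hs : 0 < s) (hτ : 0 < τ) (hτs : τ ≤ s)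
    (G : Matrix (Fin c × Fin s) (Fin c × Fin s) ℝ) (x : Fin c × Fin s → ℝ) :
    (∑ S ∈ samplings c s τ, ∑ p : Fin c × Fin s, ∑ q : Fin c × Fin s,
        restr S x p * G p q * restr S x q) / ((s.choose τ : ℝ) ^ c) =
      ((τ : ℝ) / (s : ℝ)) *
        ((1 - ((τ : ℝ) - 1) / ((max 1 (s - 1) : ℕ) : ℝ)) *
            (∑ p : Fin c × Fin s, G p p * (x p) ^ 2)
          + (((τ : ℝ) - 1) / ((max 1 (s - 1) : ℕ) : ℝ)) *
            (∑ p : Fin c × Fin s, ∑ q : Fin c × Fin s, x p * G p q * x q)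
          + ((τ : ℝ) / (s : ℝ) - ((τ : ℝ) - 1) / ((max 1 (s - 1) : ℕ) : ℝ)) *
            ((∑ p : Fin c × Fin s, ∑ q : Fin c × Fin s, x p * G p q * x q)
              - ∑ p : Fin c × Fin s, ∑ q : Fin c × Fin s,
                  if p.1 = q.1 then x p * G p q * x q else 0)) := by
  classical
  set w : Fin c × Fin s → Fin c × Fin s → ℝ := fun p q =>
    if p = q then (τ : ℝ) / s
    else if p.1 = q.1 then (τ : ℝ) / s * (((τ : ℝ) - 1) / ((max 1 (s - 1) : ℕ) : ℝ))
    else ((τ : ℝ) / s) ^ 2 with hw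
  have key : (∑ S ∈ samplings c s τ, ∑ p : Fin c × Fin s, ∑ q : Fin c × Fin s,
      restr S x p * G p q * restr S x q) / ((s.choose τ : ℝ) ^ c)
      = ∑ p : Fin c × Fin s, ∑ q : Fin c × Fin s, w p q * (x p * G p q * x q) := by
    have hswap : (∑ S ∈ samplings c s τ, ∑ p : Fin c × Fin s, ∑ q : Fin c × Fin s,
        restr S x p * G p q * restr S x q)
        = ∑ p : Fin c × Fin s, ∑ q : Fin c × Fin s, ∑ S ∈ samplings c s τ,
            restr S x p * G p q * restr S x q := by
      rw [Finset.sum_comm]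
      exact Finset.sum_congr rfl fun p _ => Finset.sum_comm
    rw [hswap, Finset.sum_div]
    refine Finset.sum_congr rfl fun p _ => ?_
    rw [Finset.sum_div]
    refine Finset.sum_congr rfl fun q _ => ?_
    rw [count_lemma, mul_div_right_comm, ratio_lemma c s τ hc hs hτ hτs p q, hw]
  rw [key]
  have hdiag : (∑ p : Fin c × Fin s, G p p * (x p) ^ 2)
      = ∑ p : Fin c × Fin s, ∑ q : Fin c × Fin s,
          (if p = q then x p * G p q * x q else 0) := by
    refine Finset.sum_congr rfl fun p _ => ?_
    rw [Finset.sum_ite_eq univ p (fun q => x p * G p q * x q), if_pos (mem_univ p)]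
    ring
  rw [hdiag]
  simp only [← Finset.sum_sub_distrib, Finset.mul_sum, ← Finset.sum_add_distrib]
  refine Finset.sum_congr rfl fun p _ => Finset.sum_congr rfl fun q _ => ?_
  by_cases hpq : p = q
  · subst hpq
    simp only [hw, if_pos rfl, if_true]
    ring
  · by_cases hb : p.1 = q.1
    · simp only [hw, if_neg hpq, if_pos hb]
      ring
    · simp only [hw, if_neg hpq, if_neg hb]
      ring
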